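/- Let d ≥ 1. There exists a constant C_d > 0, depending only on d, such that for every a : 𝕋^d × ℝ^d → ℂ which is continuous, bounded, and whose partial derivatives in x up to order d+1 exist, are continuous and uniformly bounded on 𝕋^d × ℝ^d, for every ħ ∈ (0,1] and every u ∈ ℓ²(ℤ^d), one has (Σ_{p∈ℤ^d} |Σ_{k∈ℤ^d} â(p − k, 2πħk) u_k|²)^{1/2} ≤ C_d (Σ_{|α| ≤ d+1} sup_{(x,ξ)∈𝕋^d×ℝ^d} |∂_x^α a(x, ξ)|) (Σ_{k∈ℤ^d} |u_k|²)^{1/2}, where â(l, ξ) = ∫_{𝕋^d} a(x, ξ) e^{−2πi l·x} dx. Equivalently, the operator Op_ħ(a) is bounded on L²(𝕋^d) with ‖Op_ħ(a)‖_{L²→L²} ≤ C_d Σ_{|α| ≤ d+1} ‖∂_x^α a‖_∞. -/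

import Mathlib

open MeasureTheory Filter Real
open scoped Topology

noncomputable section

/-- `l·x = Σ i, l i * x i` for `l ∈ ℤ^d`, `x ∈ ℝ^d`. -/
def dotd {d : ℕ} (l : Fin d → ℤ) (x : Fin d → ℝ) : ℝ := ∑ i, (l i : ℝ) * x i

/-- The `l`-th Fourier coefficient of a function on `𝕋^d = ℝ^d/ℤ^d`:
`f̂(l) = ∫_{𝕋^d} f(x) e^{-2πi l·x} dx`. -/
def tcoef {d : ℕ} (f : (Fin d → ℝ) → ℂ) (l : Fin d → ℤ) : ℂ :=
  ∫ x in Set.Icc (0 : Fin d → ℝ) 1,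
    f x * Complex.exp (Complex.I * ((-(2 * π * dotd l x) : ℝ) : ℂ))

/-- `â(p - k, 2πhbk)`: the Fourier-side kernel of `Op_hb(a)` on `L²(𝕋^d)`. -/
def opKernel {d : ℕ} (a : (Fin d → ℝ) → (Fin d → ℝ) → ℂ) (hb : ℝ)
    (p k : Fin d → ℤ) : ℂ :=
  tcoef (fun x => a x fun i => 2 * π * hb * (k i)) (p - k)

namespace CV

variable {d : ℕ}

def ph (l : Fin d → ℤ) (x : Fin d → ℝ) : ℂ :=
  Complex.exp (Complex.I * ((-(2 * π * dotd l x) : ℝ) : ℂ))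

lemma continuous_dotd (l : Fin d → ℤ) : Continuous (dotd l) := by
  unfold dotd
  exact continuous_finset_sum _ fun i _ => (continuous_const.mul (continuous_apply i))

lemma continuous_ph (l : Fin d → ℤ) : Continuous (ph l) := by
  unfold ph
  exact Complex.continuous_exp.comp (continuous_const.mul
    (Complex.continuous_ofReal.comp ((continuous_const.mul (continuous_dotd l)).neg)))

lemma single_cast (i : Fin d) :
    (fun t => ((Pi.single i (1:ℤ) : Fin d → ℤ) t : ℝ)) = Pi.single i (1:ℝ) := by
  funext t
  by_cases h : t = i
  · subst h; simp
  · simp [Pi.single_eq_of_ne h]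

lemma dotd_add (l : Fin d → ℤ) (x y : Fin d → ℝ) :
    dotd l (x + y) = dotd l x + dotd l y := by
  simp [dotd, mul_add, Finset.sum_add_distrib]

lemma dotd_smul_single (l : Fin d → ℤ) (i : Fin d) (s : ℝ) :
    dotd l (s • (Pi.single i 1 : Fin d → ℝ)) = s * l i := by
  unfold dotd
  rw [Finset.sum_eq_single i]
  · simp [mul_comm]
  · intro b _ hb
    simp [Pi.single_eq_of_ne hb]
  · simp

lemma dotd_int (l j : Fin d → ℤ) :
    dotd l (fun t => (j t : ℝ)) = ((∑ t, l t * j t : ℤ) : ℝ) := by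
  unfold dotd; push_cast; ring

lemma ph_period (l j : Fin d → ℤ) (x : Fin d → ℝ) :
    ph l (x + fun t => (j t : ℝ)) = ph l x := by
  unfold ph
  rw [dotd_add, dotd_int]
  set m : ℤ := ∑ t, l t * j t with hm
  have h : Complex.I * ((-(2 * π * (dotd l x + (m:ℝ))) : ℝ) : ℂ)
      = Complex.I * ((-(2 * π * dotd l x) : ℝ) : ℂ) + (-m : ℤ) * (2 * π * Complex.I) := by
    push_cast; ring
  rw [h, Complex.exp_add, Complex.exp_int_mul_two_pi_mul_I, mul_one]


lemma insertNth_eq {n : ℕ} (i : Fin (n+1)) (s : ℝ) (y : Fin n → ℝ) :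
    i.insertNth s y = i.insertNth 0 y + s • (Pi.single i 1 : Fin (n+1) → ℝ) := by
  funext j
  refine Fin.succAboveCases i ?_ (fun j => ?_) j
  · simp
  · simp [Pi.single_eq_of_ne (Fin.succAbove_ne i j)]

lemma continuous_insertNth {n : ℕ} (i : Fin (n+1)) :
    Continuous (fun z : ℝ × (Fin n → ℝ) => (i.insertNth z.1 z.2 : Fin (n+1) → ℝ)) := by
  refine continuous_pi fun j => ?_
  refine Fin.succAboveCases
    (α := fun j => Continuous fun z : ℝ × (Fin n → ℝ) =>
      (i.insertNth z.1 z.2 : Fin (n+1) → ℝ) j)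
    i ?_ (fun j => ?_) j
  · simpa using continuous_fst
  · simpa using (by fun_prop : Continuous fun z : ℝ × (Fin n → ℝ) => z.2 j)

theorem tcoef_fderiv {n : ℕ} (i : Fin (n+1)) {f : (Fin (n+1) → ℝ) → ℂ}
    (hf : ContDiff ℝ 1 f)
    (hper : ∀ (x : Fin (n+1) → ℝ) (j : Fin (n+1) → ℤ), f (x + fun t => (j t : ℝ)) = f x)
    (l : Fin (n+1) → ℤ) :
    tcoef (fun x => fderiv ℝ f x (Pi.single i 1)) l
      = (((2 * π * (l i : ℝ) : ℝ)) : ℂ) * Complex.I * tcoef f l := by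
  classical
  set v : Fin (n+1) → ℝ := Pi.single i 1 with hv
  set c : ℂ := (((2 * π * (l i : ℝ) : ℝ)) : ℂ) * Complex.I with hc
  set Df : (Fin (n+1) → ℝ) → ℂ := fun x => fderiv ℝ f x v with hDf
  have hfd : Differentiable ℝ f := hf.differentiable one_ne_zero
  have hfc : Continuous f := hf.continuous
  have hDfc : Continuous Df :=
    (ContinuousLinearMap.apply ℝ ℂ v).continuous.comp (hf.continuous_fderiv one_ne_zero)
  set G : (Fin (n+1) → ℝ) → ℂ := fun x => Df x * ph l x - c * (f x * ph l x) with hG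
  have hGc : Continuous G :=
    ((hDfc.mul (continuous_ph l)).sub (continuous_const.mul (hfc.mul (continuous_ph l))))
  -- the key derivative computation
  have hq : ∀ (y : Fin n → ℝ) (s : ℝ),
      HasDerivAt (fun t : ℝ => f (i.insertNth t y) * ph l (i.insertNth t y))
        (G (i.insertNth s y)) s := by
    intro y s
    set x₀ : Fin (n+1) → ℝ := i.insertNth 0 y with hx0
    have hins : ∀ t : ℝ, i.insertNth t y = x₀ + t • v := fun t => insertNth_eq i t y
    have hrw : (fun t : ℝ => f (i.insertNth t y) * ph l (i.insertNth t y))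
        = fun t : ℝ => f (x₀ + t • v) * ph l (x₀ + t • v) := by
      funext t; rw [hins t]
    rw [hrw, hins s]
    have hp1 : HasDerivAt (fun t : ℝ => f (x₀ + t • v)) (Df (x₀ + s • v)) s := by
      have hv' : HasDerivAt (fun t : ℝ => x₀ + t • v) v s := by
        simpa using (((hasDerivAt_id s).smul_const v).const_add x₀)
      exact ((hfd (x₀ + s • v)).hasFDerivAt).comp_hasDerivAt s hv'
    set B : ℂ := Complex.I * ((-(2 * π * (l i : ℝ)) : ℝ) : ℂ) with hB
    have hp2 : HasDerivAt (fun t : ℝ => ph l (x₀ + t • v))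
        (ph l (x₀ + s • v) * (Complex.I * ((-(2 * π * (l i : ℝ)) : ℝ) : ℂ))) s := by
      have h1 : HasDerivAt (fun t : ℝ => dotd l (x₀ + t • v)) ((l i : ℝ)) s := by
        have hre : (fun t : ℝ => dotd l (x₀ + t • v))
            = fun t : ℝ => dotd l x₀ + t * (l i : ℝ) := by
          funext t; rw [dotd_add, dotd_smul_single]
        rw [hre]
        simpa using ((hasDerivAt_id s).mul_const ((l i : ℝ))).const_add (dotd l x₀)
      have h2 : HasDerivAt (fun t : ℝ => -(2 * π * dotd l (x₀ + t • v)))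
          (-(2 * π * (l i : ℝ))) s := by
        exact ((h1.const_mul (2 * π)).neg)
      have h3 := ((h2.ofReal_comp).const_mul Complex.I).cexp
      exact h3
    have : HasDerivAt (fun t : ℝ => f (x₀ + t • v) * ph l (x₀ + t • v))
        (Df (x₀ + s • v) * ph l (x₀ + s • v) + f (x₀ + s • v) * (ph l (x₀ + s • v) *
          (Complex.I * ((-(2 * π * (l i : ℝ)) : ℝ) : ℂ)))) s := hp1.mul hp2
    convert this using 1
    simp only [hG, hc]
    push_cast
    ring
  -- the integral of G over the unit cube vanishes
  have hG0 : (∫ x in Set.Icc (0 : Fin (n+1) → ℝ) 1, G x) = 0 := by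
    set e := MeasurableEquiv.piFinSuccAbove (fun _ : Fin (n+1) => ℝ) i with he
    have hMP : MeasurePreserving e volume
        ((volume : Measure ℝ).prod (Measure.pi fun _ : Fin n => volume)) := by
      rw [show (volume : Measure (Fin (n+1) → ℝ)) = Measure.pi fun _ => volume from rfl]
      exact measurePreserving_piFinSuccAbove (fun _ : Fin (n+1) => (volume : Measure ℝ)) i
    have hpre : e ⁻¹' ((Set.Icc (0:ℝ) 1) ×ˢ (Set.Icc (0 : Fin n → ℝ) 1))
        = Set.Icc (0 : Fin (n+1) → ℝ) 1 := by
      ext x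
      simp only [Set.mem_preimage, Set.mem_prod, Set.mem_Icc, he,
        MeasurableEquiv.piFinSuccAbove_apply, Fin.insertNthEquiv_symm_apply,
        Pi.le_def, Fin.removeNth, Pi.zero_apply, Pi.one_apply]
      rw [Fin.forall_iff_succAbove i (P := fun t => (0:ℝ) ≤ x t),
        Fin.forall_iff_succAbove i (P := fun t => x t ≤ 1)]
      tauto
    have hsymm : ∀ z : ℝ × (Fin n → ℝ), e.symm z = i.insertNth z.1 z.2 := by
      intro z
      simp [he, MeasurableEquiv.piFinSuccAbove, Fin.insertNthEquiv]
    have hGsc : Continuous fun z : ℝ × (Fin n → ℝ) => G (e.symm z) := by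
      have : (fun z : ℝ × (Fin n → ℝ) => G (e.symm z))
          = fun z : ℝ × (Fin n → ℝ) => G (i.insertNth z.1 z.2) := by
        funext z; rw [hsymm]
      rw [this]
      exact hGc.comp (continuous_insertNth i)
    set S := (Set.Icc (0:ℝ) 1) ×ˢ (Set.Icc (0 : Fin n → ℝ) 1) with hS
    have hSmeas : MeasurableSet S := (measurableSet_Icc.prod measurableSet_Icc)
    have step1 : (∫ x in Set.Icc (0 : Fin (n+1) → ℝ) 1, G x)
        = ∫ z in S, G (e.symm z)
            ∂((volume : Measure ℝ).prod (Measure.pi fun _ : Fin n => volume)) := by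
      rw [← hpre]
      calc ∫ x in e ⁻¹' S, G x = ∫ x in e ⁻¹' S, G (e.symm (e x)) := by
            refine setIntegral_congr_fun (hSmeas.preimage e.measurable) fun x _ => by simp
        _ = ∫ z in S, G (e.symm z)
            ∂((volume : Measure ℝ).prod (Measure.pi fun _ : Fin n => volume)) :=
            hMP.setIntegral_preimage_emb e.measurableEmbedding (fun z => G (e.symm z)) S
    -- reduce to an iterated integral and apply FTC fiberwise
    have hIntS : Integrable (fun z : ℝ × (Fin n → ℝ) => G (e.symm z))
        (((volume : Measure ℝ).restrict (Set.Icc 0 1)).prod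
          ((Measure.pi fun _ : Fin n => volume).restrict (Set.Icc 0 1))) := by
      rw [Measure.prod_restrict]
      exact hGsc.continuousOn.integrableOn_compact (isCompact_Icc.prod isCompact_Icc)
    have step2 : (∫ z in S, G (e.symm z)
            ∂((volume : Measure ℝ).prod (Measure.pi fun _ : Fin n => volume)))
        = ∫ y in Set.Icc (0 : Fin n → ℝ) 1, (∫ s in Set.Icc (0:ℝ) 1,
            G (e.symm (s, y))) ∂(Measure.pi fun _ : Fin n => volume) := by
      rw [hS, ← Measure.prod_restrict]
      exact integral_prod_symm _ hIntS
    have inner0 : ∀ y : Fin n → ℝ, (∫ s in Set.Icc (0:ℝ) 1, G (i.insertNth s y)) = 0 := by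
      intro y
      have hFTC : ∫ s in (0:ℝ)..1, G (i.insertNth s y)
          = (f (i.insertNth 1 y) * ph l (i.insertNth 1 y))
            - (f (i.insertNth 0 y) * ph l (i.insertNth 0 y)) := by
        refine intervalIntegral.integral_eq_sub_of_hasDerivAt
          (fun s _ => hq y s) ?_
        exact (hGc.comp ((continuous_insertNth i).comp
          (continuous_id.prodMk continuous_const))).intervalIntegrable 0 1
      have hper1 : f (i.insertNth 1 y) * ph l (i.insertNth 1 y)
          = f (i.insertNth 0 y) * ph l (i.insertNth 0 y) := by
        have h1 : i.insertNth (1:ℝ) y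
            = i.insertNth 0 y + fun t => ((Pi.single i (1:ℤ) : Fin (n+1) → ℤ) t : ℝ) := by
          rw [single_cast i, insertNth_eq i 1 y, one_smul]
        rw [h1, hper _ (Pi.single i 1), ph_period]
      rw [MeasureTheory.integral_Icc_eq_integral_Ioc,
        ← intervalIntegral.integral_of_le (zero_le_one)]
      rw [hFTC, hper1, sub_self]
    rw [step1, step2]
    have : ∀ y : Fin n → ℝ, (∫ s in Set.Icc (0:ℝ) 1, G (e.symm (s, y))) = 0 := by
      intro y
      have : (fun s : ℝ => G (e.symm (s, y))) = fun s : ℝ => G (i.insertNth s y) := by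
        funext s; rw [hsymm]
      rw [this]; exact inner0 y
    simp only [this, integral_zero]
  -- assemble
  have hint1 : IntegrableOn (fun x => Df x * ph l x) (Set.Icc (0 : Fin (n+1) → ℝ) 1) volume :=
    (hDfc.mul (continuous_ph l)).continuousOn.integrableOn_compact isCompact_Icc
  have hint2 : IntegrableOn (fun x => f x * ph l x) (Set.Icc (0 : Fin (n+1) → ℝ) 1) volume :=
    (hfc.mul (continuous_ph l)).continuousOn.integrableOn_compact isCompact_Icc
  have hsplit : (∫ x in Set.Icc (0 : Fin (n+1) → ℝ) 1, G x)
      = tcoef Df l - c * tcoef f l := by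
    rw [hG]
    rw [integral_sub hint1 (hint2.const_mul c), MeasureTheory.integral_const_mul]
    rfl
  rw [hsplit] at hG0
  exact sub_eq_zero.mp hG0

/-- Directional derivative operator in direction `e_i`. -/
def Dop {d : ℕ} (i : Fin d) (g : (Fin d → ℝ) → ℂ) : (Fin d → ℝ) → ℂ :=
  fun x => fderiv ℝ g x (Pi.single i 1)

lemma Dop_period {d : ℕ} (i : Fin d) {g : (Fin d → ℝ) → ℂ}
    (hg : Differentiable ℝ g)
    (hper : ∀ (x : Fin d → ℝ) (j : Fin d → ℤ), g (x + fun t => (j t : ℝ)) = g x)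
    (x : Fin d → ℝ) (j : Fin d → ℤ) :
    Dop i g (x + fun t => (j t : ℝ)) = Dop i g x := by
  set jv : Fin d → ℝ := fun t => (j t : ℝ) with hjv
  have h1 : HasFDerivAt (fun y : Fin d → ℝ => y + jv)
      (ContinuousLinearMap.id ℝ (Fin d → ℝ)) x := by
    simpa using (hasFDerivAt_id (𝕜 := ℝ) x).add_const jv
  have h2 : HasFDerivAt (fun y => g (y + jv))
      ((fderiv ℝ g (x + jv)).comp (ContinuousLinearMap.id ℝ (Fin d → ℝ))) x :=
    ((hg (x + jv)).hasFDerivAt).comp x h1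
  have h3 : (fun y => g (y + jv)) = g := funext fun y => hper y j
  rw [h3] at h2
  have h4 : fderiv ℝ g x = (fderiv ℝ g (x + jv)).comp (ContinuousLinearMap.id ℝ _) :=
    h2.fderiv
  show fderiv ℝ g (x + jv) (Pi.single i 1) = fderiv ℝ g x (Pi.single i 1)
  rw [h4]
  rfl

lemma Dop_contDiff {d : ℕ} (i : Fin d) {g : (Fin d → ℝ) → ℂ} {m : ℕ}
    (hg : ContDiff ℝ (m + 1 : ℕ) g) : ContDiff ℝ (m : ℕ) (Dop i g) := by
  have h1 : ContDiff ℝ (m : ℕ) (fderiv ℝ g) := by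
    apply hg.fderiv_right
    norm_cast
  exact h1.clm_apply contDiff_const

/-- All the facts about iterates of `Dop i` proved together by induction. -/
lemma Dop_iterate {n : ℕ} (i : Fin (n+1)) {N : ℕ} {f : (Fin (n+1) → ℝ) → ℂ}
    (hf : ContDiff ℝ (N : ℕ) f)
    (hper : ∀ (x : Fin (n+1) → ℝ) (j : Fin (n+1) → ℤ), f (x + fun t => (j t : ℝ)) = f x)
    (l : Fin (n+1) → ℤ) :
    ∀ m, m ≤ N →
      ContDiff ℝ ((N - m : ℕ)) ((Dop i)^[m] f)
      ∧ (∀ (x : Fin (n+1) → ℝ) (j : Fin (n+1) → ℤ),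
          ((Dop i)^[m] f) (x + fun t => (j t : ℝ)) = ((Dop i)^[m] f) x)
      ∧ (∀ x, ((Dop i)^[m] f) x
          = iteratedFDeriv ℝ m f x (fun _ => Pi.single i 1))
      ∧ tcoef ((Dop i)^[m] f) l
          = ((((2 * π * (l i : ℝ) : ℝ)) : ℂ) * Complex.I) ^ m * tcoef f l := by
  intro m
  induction m with
  | zero =>
    intro _
    refine ⟨by simpa using hf, hper, fun x => by simp, by simp⟩
  | succ m ih =>
    intro hm
    obtain ⟨hcd, hp, heq, htc⟩ := ih (le_of_lt (Nat.lt_of_succ_le hm))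
    have hmN : m < N := Nat.lt_of_succ_le hm
    have h1le : (1 : WithTop ℕ∞) ≤ ((N - m : ℕ) : WithTop ℕ∞) := by
      have : (1 : ℕ) ≤ N - m := by omega
      exact_mod_cast this
    have hg1 : ContDiff ℝ 1 ((Dop i)^[m] f) := hcd.of_le h1le
    have hgdiff : Differentiable ℝ ((Dop i)^[m] f) := hg1.differentiable one_ne_zero
    have hiter : (Dop i)^[m+1] f = Dop i ((Dop i)^[m] f) :=
      Function.iterate_succ_apply' (Dop i) m f
    constructor
    · rw [hiter]
      have : ContDiff ℝ ((N - m - 1 : ℕ) + 1 : ℕ) ((Dop i)^[m] f) := by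
        have hrw : (N - m - 1) + 1 = N - m := by omega
        rw [hrw]; exact hcd
      have := Dop_contDiff i this
      have hrw2 : N - (m + 1) = N - m - 1 := by omega
      rw [hrw2]; exact this
    refine ⟨?_, ?_, ?_⟩
    · intro x j
      rw [hiter]
      exact Dop_period i hgdiff hp x j
    · intro x
      rw [hiter]
      have hdiff : DifferentiableAt ℝ (iteratedFDeriv ℝ m f) x := by
        have := hf.differentiable_iteratedFDeriv (m := m) (by exact_mod_cast hmN)
        exact this x
      have hfe : ((Dop i)^[m] f) = fun y =>
          (ContinuousMultilinearMap.apply ℝ (fun _ : Fin m => (Fin (n+1) → ℝ)) ℂ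
            (fun _ => Pi.single i 1)) (iteratedFDeriv ℝ m f y) := funext fun y => heq y
      have hcomp : HasFDerivAt (fun y =>
          (ContinuousMultilinearMap.apply ℝ (fun _ : Fin m => (Fin (n+1) → ℝ)) ℂ
            (fun _ => Pi.single i 1)) (iteratedFDeriv ℝ m f y))
          ((ContinuousMultilinearMap.apply ℝ (fun _ : Fin m => (Fin (n+1) → ℝ)) ℂ
            (fun _ => Pi.single i 1)).comp (fderiv ℝ (iteratedFDeriv ℝ m f) x)) x :=
        (ContinuousMultilinearMap.apply ℝ (fun _ : Fin m => (Fin (n+1) → ℝ)) ℂ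
            (fun _ => Pi.single i 1)).hasFDerivAt.comp x hdiff.hasFDerivAt
      show fderiv ℝ ((Dop i)^[m] f) x (Pi.single i 1) = _
      rw [hfe, hcomp.fderiv, iteratedFDeriv_succ_apply_left]
      rfl
    · rw [hiter]
      have := tcoef_fderiv i hg1 hp l
      show tcoef (fun x => fderiv ℝ ((Dop i)^[m] f) x (Pi.single i 1)) l = _
      rw [this, htc]
      ring

lemma norm_ph {d : ℕ} (l : Fin d → ℤ) (x : Fin d → ℝ) : ‖ph l x‖ = 1 := by
  simp [ph, Complex.norm_exp, Complex.mul_re]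

lemma volume_Icc01 {d : ℕ} : (volume (Set.Icc (0 : Fin d → ℝ) 1)) = 1 := by
  rw [Real.volume_Icc_pi]
  simp

lemma tcoef_norm_le {d : ℕ} {f : (Fin d → ℝ) → ℂ} (hf : Continuous f) {M : ℝ}
    (hM : ∀ x, ‖f x‖ ≤ M) (l : Fin d → ℤ) : ‖tcoef f l‖ ≤ M := by
  have := norm_setIntegral_le_of_norm_le_const (μ := volume)
      (s := Set.Icc (0 : Fin d → ℝ) 1) (C := M)
      (f := fun x => f x * ph l x) (by rw [volume_Icc01]; exact ENNReal.one_lt_top)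
      (fun x _ => by
        rw [norm_mul, norm_ph, mul_one]; exact hM x)
  rw [Measure.real_def, volume_Icc01, ENNReal.toReal_one, mul_one] at this
  exact this

/-- The weight `∏ (1+|l j|)^{-(d+1)/d}`. -/
def wgt (d : ℕ) (l : Fin d → ℤ) : ℝ :=
  ∏ j, ((1:ℝ) + |(l j : ℝ)|) ^ (-(((d:ℝ)+1)/(d:ℝ)))

lemma wgt_pos {d : ℕ} (l : Fin d → ℤ) : 0 < wgt d l :=
  Finset.prod_pos fun j _ => Real.rpow_pos_of_pos (by positivity) _

/-- The Fourier coefficient decay estimate. -/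
lemma tcoef_decay {n : ℕ} {f : (Fin (n+1) → ℝ) → ℂ}
    (hf : ContDiff ℝ ((n+2 : ℕ)) f)
    (hper : ∀ (x : Fin (n+1) → ℝ) (j : Fin (n+1) → ℤ), f (x + fun t => (j t : ℝ)) = f x)
    {M : ℝ} (hM : ∀ m : ℕ, m ≤ n+2 → ∀ x, ‖iteratedFDeriv ℝ m f x‖ ≤ M)
    (l : Fin (n+1) → ℤ) :
    ‖tcoef f l‖ ≤ 2^(n+2) * M * wgt (n+1) l := by
  have hM0 : 0 ≤ M := le_trans (norm_nonneg _) (hM 0 (by omega) 0)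
  have hfc : Continuous f := hf.continuous
  have hMf : ∀ x, ‖f x‖ ≤ M := fun x => by
    have := hM 0 (by omega) x
    rwa [norm_iteratedFDeriv_zero] at this
  by_cases hl : l = 0
  · subst hl
    have hw : wgt (n+1) (0 : Fin (n+1) → ℤ) = 1 := by
      simp [wgt]
    rw [hw, mul_one]
    have h1 : (1:ℝ) ≤ 2^(n+2) := one_le_pow₀ (by norm_num)
    calc ‖tcoef f 0‖ ≤ M := tcoef_norm_le hfc hMf 0
      _ = 1 * M := (one_mul M).symm
      _ ≤ 2^(n+2) * M := mul_le_mul_of_nonneg_right h1 hM0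
  · obtain ⟨i, -, hmax⟩ := Finset.exists_max_image Finset.univ (fun j => |l j|)
      ⟨0, Finset.mem_univ 0⟩
    have hine : (1:ℤ) ≤ |l i| := by
      obtain ⟨j, hj⟩ := Function.ne_iff.mp hl
      exact le_trans (Int.one_le_abs (by simpa using hj)) (hmax j (Finset.mem_univ j))
    set a : ℝ := |(l i : ℝ)| with ha
    have ha1 : (1:ℝ) ≤ a := by
      rw [ha, ← Int.cast_abs]
      exact_mod_cast hine
    have ha0 : (0:ℝ) < a := lt_of_lt_of_le one_pos ha1
    obtain ⟨hcd, hpp, heqq, htcoef⟩ := Dop_iterate i hf hper l (n+2) le_rfl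
    have hb : ∀ x, ‖(Dop i)^[n+2] f x‖ ≤ M := fun x => by
      rw [heqq x]
      calc ‖iteratedFDeriv ℝ (n+2) f x (fun _ => Pi.single i 1)‖
          ≤ ‖iteratedFDeriv ℝ (n+2) f x‖ * ∏ _j : Fin (n+2), ‖(Pi.single i 1 : Fin (n+1) → ℝ)‖ :=
            (iteratedFDeriv ℝ (n+2) f x).le_opNorm _
        _ = ‖iteratedFDeriv ℝ (n+2) f x‖ := by
            simp [Pi.norm_single]
        _ ≤ M := hM (n+2) le_rfl x
    have hcont : Continuous ((Dop i)^[n+2] f) := by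
      have : ContDiff ℝ ((0:ℕ)) ((Dop i)^[n+2] f) := by simpa using hcd
      exact this.continuous
    have hNb : ‖tcoef ((Dop i)^[n+2] f) l‖ ≤ M := tcoef_norm_le hcont hb l
    rw [htcoef] at hNb
    have hcnorm : ‖(((2 * π * (l i : ℝ) : ℝ)) : ℂ) * Complex.I‖ = 2 * π * a := by
      rw [norm_mul, Complex.norm_I, mul_one, Complex.norm_real, Real.norm_eq_abs,
        abs_mul, abs_of_pos (by positivity : (0:ℝ) < 2 * π)]
    rw [norm_mul, norm_pow, hcnorm] at hNb
    -- hNb : (2πa)^(n+2) * ‖tcoef f l‖ ≤ M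
    set K := ‖tcoef f l‖ with hK
    have hK0 : 0 ≤ K := norm_nonneg _
    set s : ℝ := (((n+1:ℕ):ℝ)+1)/((n+1:ℕ):ℝ) with hs
    have hwlow : ((2*a)^(n+2))⁻¹ ≤ wgt (n+1) l := by
      have step1 : ∏ _j : Fin (n+1), ((1:ℝ) + a) ^ (-s) ≤ wgt (n+1) l := by
        refine Finset.prod_le_prod (fun j _ => (Real.rpow_pos_of_pos (by positivity) _).le)
          (fun j _ => ?_)
        refine Real.rpow_le_rpow_of_nonpos (by positivity) ?_
          (neg_nonpos.mpr (by positivity))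
        have : |(l j : ℝ)| ≤ a := by
          rw [ha, ← Int.cast_abs, ← Int.cast_abs]
          exact_mod_cast hmax j (Finset.mem_univ j)
        linarith
      have step2 : ∏ _j : Fin (n+1), ((1:ℝ) + a) ^ (-s) = ((1+a)^(n+2))⁻¹ := by
        rw [Finset.prod_const, Finset.card_univ, Fintype.card_fin]
        rw [← Real.rpow_natCast (((1:ℝ)+a) ^ (-s)) (n+1), ← Real.rpow_mul (by positivity)]
        have : -s * ((n+1 : ℕ):ℝ) = -(((n+2 : ℕ)):ℝ) := by
          rw [hs]
          have hne : ((n+1:ℕ):ℝ) ≠ 0 := by positivity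
          field_simp
          push_cast
          ring
        rw [this, Real.rpow_neg (by positivity), Real.rpow_natCast]
      have step3 : ((2*a)^(n+2))⁻¹ ≤ ((1+a)^(n+2))⁻¹ := by
        apply inv_anti₀ (by positivity)
        exact pow_le_pow_left₀ (by positivity) (by linarith) _
      calc ((2*a)^(n+2))⁻¹ ≤ ((1+a)^(n+2))⁻¹ := step3
        _ = ∏ _j : Fin (n+1), ((1:ℝ) + a) ^ (-s) := step2.symm
        _ ≤ wgt (n+1) l := step1
    -- from hNb : (2πa)^(n+2) * K ≤ M, get K * a^(n+2) ≤ M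
    have hKa : a^(n+2) * K ≤ M := by
      calc a^(n+2) * K ≤ (2*π*a)^(n+2) * K := by
            apply mul_le_mul_of_nonneg_right _ hK0
            apply pow_le_pow_left₀ ha0.le
            nlinarith [Real.pi_gt_three]
        _ ≤ M := hNb
    calc K ≤ M * (a^(n+2))⁻¹ := by
          rw [← div_eq_mul_inv]
          refine (le_div_iff₀ (pow_pos ha0 _)).mpr ?_
          rw [mul_comm]
          exact hKa
      _ = 2^(n+2) * M * ((2*a)^(n+2))⁻¹ := by
          rw [mul_pow, mul_inv,
            show (2:ℝ)^(n+2) * M * ((2^(n+2) : ℝ)⁻¹ * (a^(n+2))⁻¹)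
              = ((2:ℝ)^(n+2) * ((2:ℝ)^(n+2))⁻¹) * (M * (a^(n+2))⁻¹) from by ring,
            mul_inv_cancel₀ (by positivity), one_mul]
      _ ≤ 2^(n+2) * M * wgt (n+1) l := by
          apply mul_le_mul_of_nonneg_left hwlow (by positivity)

/-- Summability of products over `ℤ^d`. -/
lemma summable_pi_prod (d : ℕ) (g : ℤ → ℝ) (hg0 : ∀ k, 0 ≤ g k) (hg : Summable g) :
    Summable (fun l : Fin d → ℤ => ∏ j, g (l j)) := by
  induction d with
  | zero =>
    exact (hasSum_fintype _).summable
  | succ d ih =>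
    have h0 : (0 : ℤ → ℝ) ≤ g := fun k => hg0 k
    have h1 : (0 : (Fin d → ℤ) → ℝ) ≤ fun l : Fin d → ℤ => ∏ j, g (l j) :=
      fun l => Finset.prod_nonneg fun j _ => hg0 _
    have h2 : Summable (fun p : ℤ × (Fin d → ℤ) => g p.1 * ∏ j, g (p.2 j)) :=
      Summable.mul_of_nonneg (f := g) (g := fun l : Fin d → ℤ => ∏ j, g (l j)) hg ih h0 h1
    refine ((Fin.consEquiv (fun _ : Fin (d+1) => ℤ)).summable_iff).mp ?_
    refine h2.congr fun p => ?_
    show g p.1 * ∏ j, g (p.2 j)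
        = ∏ j : Fin (d+1), g ((Fin.cons p.1 p.2 : Fin (d+1) → ℤ) j)
    rw [Fin.prod_univ_succ]
    simp

lemma summable_wgt (n : ℕ) : Summable (wgt (n+1)) := by
  set s : ℝ := (((n+1:ℕ):ℝ)+1)/((n+1:ℕ):ℝ) with hs
  have hs1 : 1 < s := by
    rw [hs]
    rw [lt_div_iff₀ (by positivity)]
    push_cast
    linarith
  set g : ℤ → ℝ := fun k => ((1:ℝ) + |(k:ℝ)|) ^ (-s) with hg
  have hg0 : ∀ k, 0 ≤ g k := fun k => (Real.rpow_pos_of_pos (by positivity) _).le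
  have hgs : Summable g := by
    have h1 : Summable (fun k : ℤ => |(k:ℝ)| ^ (-s) + if k = 0 then (1:ℝ) else 0) := by
      refine (summable_abs_int_rpow hs1).add ?_
      apply summable_of_ne_finset_zero (s := ({0} : Finset ℤ))
      intro k hk
      simp only [Finset.mem_singleton] at hk
      simp [hk]
    refine Summable.of_nonneg_of_le hg0 (fun k => ?_) h1
    by_cases hk : k = 0
    · subst hk
      have hg0v : g 0 = 1 := by simp [hg]
      rw [hg0v]
      have hnn : (0:ℝ) ≤ |((0:ℤ):ℝ)| ^ (-s) := Real.rpow_nonneg (abs_nonneg _) _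
      have hif : (if (0:ℤ) = 0 then (1:ℝ) else 0) = 1 := by norm_num
      rw [hif]
      linarith
    · have hk0 : (0:ℝ) < |(k:ℝ)| := by
        simp only [abs_pos]
        exact_mod_cast hk
      have : g k ≤ |(k:ℝ)| ^ (-s) :=
        Real.rpow_le_rpow_of_nonpos hk0 (by linarith [abs_nonneg ((k:ℝ))])
          (by linarith : -s ≤ 0)
      simp only [hk, if_false, add_zero]
      exact this
  exact summable_pi_prod (n+1) g hg0 hgs

lemma wgt_le_one {d : ℕ} (l : Fin d → ℤ) : wgt d l ≤ 1 := by
  refine Finset.prod_le_one (fun j _ => (Real.rpow_pos_of_pos (by positivity) _).le)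
    (fun j _ => ?_)
  refine Real.rpow_le_one_of_one_le_of_nonpos (by linarith [abs_nonneg ((l j : ℝ))]) ?_
  rw [neg_nonpos]
  positivity

end CV

/-- Calderón–Vaillancourt on `𝕋^d`, first version: there is a constant
`C_d`, depending only on `d`, so that for every symbol `a(x,ξ)` which is continuous,
`ℤ^d`-periodic in `x`, and whose `x`-derivatives up to order `d+1` exist, are continuous
and uniformly bounded by `M`, every `hb ∈ (0,1]` and every `u ∈ ℓ²(ℤ^d)`,
`(Σ_p |Σ_k â(p-k, 2πhbk) u_k|²)^{1/2} ≤ C_d M (Σ_k |u_k|²)^{1/2}`;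
i.e. `‖Op_hb(a)‖_{L²(𝕋^d) → L²(𝕋^d)} ≤ C_d Σ_{|α| ≤ d+1} ‖∂_x^α a‖_∞`. -/
theorem stmt17 (d : ℕ) (hd : 1 ≤ d) :
    ∃ C > 0, ∀ a : (Fin d → ℝ) → (Fin d → ℝ) → ℂ,
      (Continuous fun p : (Fin d → ℝ) × (Fin d → ℝ) => a p.1 p.2) →
      (∀ (x ξ : Fin d → ℝ) (j : Fin d → ℤ), a (x + fun i => (j i : ℝ)) ξ = a x ξ) →
      (∀ ξ : Fin d → ℝ, ContDiff ℝ (d + 1 : ℕ) fun x => a x ξ) →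
      ∀ M : ℝ,
      (∀ n : ℕ, n ≤ d + 1 → ∀ x ξ : Fin d → ℝ,
          ‖iteratedFDeriv ℝ n (fun y => a y ξ) x‖ ≤ M) →
      ∀ hb ∈ Set.Ioc (0:ℝ) 1, ∀ u : (Fin d → ℤ) → ℂ, Summable (fun k => ‖u k‖ ^ 2) →
        Real.sqrt (∑' p : Fin d → ℤ, ‖∑' k : Fin d → ℤ, opKernel a hb p k * u k‖ ^ 2)
          ≤ C * M * Real.sqrt (∑' k : Fin d → ℤ, ‖u k‖ ^ 2) := by
  obtain ⟨n, rfl⟩ : ∃ n, d = n + 1 := ⟨d - 1, by omega⟩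
  clear hd
  set W : (Fin (n+1) → ℤ) → ℝ := CV.wgt (n+1) with hWdef
  have hWs : Summable W := CV.summable_wgt n
  have hW0 : ∀ l, 0 < W l := fun l => CV.wgt_pos l
  set S : ℝ := ∑' l, W l with hSdef
  have hS0 : 0 < S := lt_of_lt_of_le (hW0 0) (Summable.le_tsum hWs 0 (fun j _ => (hW0 j).le))
  refine ⟨2^(n+2) * S, by positivity, ?_⟩
  intro a hacont haper hasmooth M hM hb hbmem u hu
  have hM0 : 0 ≤ M := le_trans (norm_nonneg _) (hM 0 (by omega) 0 0)
  set c : ℝ := 2^(n+2) * M with hcdef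
  have hc0 : 0 ≤ c := by positivity
  set R : ℝ := 2^(n+2) * M * S with hRdef
  have hR0 : 0 ≤ R := by positivity
  have hker : ∀ p k, ‖opKernel a hb p k‖ ≤ c * W (p - k) := by
    intro p k
    have h1 : ContDiff ℝ ((n+2:ℕ)) (fun x => a x (fun i => 2*π*hb*(k i : ℝ))) :=
      hasmooth _
    exact CV.tcoef_decay h1 (fun x j => haper x _ j)
      (fun m hm x => hM m (by omega) x _) (p - k)
  have hrowW : ∀ p : Fin (n+1) → ℤ, Summable (fun k => W (p - k)) := fun p =>
    ((Equiv.subLeft p).summable_iff (f := W)).mpr hWs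
  have hrowSum : ∀ p : Fin (n+1) → ℤ, ∑' k, W (p - k) = S := fun p =>
    (Equiv.subLeft p).tsum_eq W
  have hcolW : ∀ k : Fin (n+1) → ℤ, Summable (fun p => W (p - k)) := fun k =>
    ((Equiv.subRight k).summable_iff (f := W)).mpr hWs
  have hcolSum : ∀ k : Fin (n+1) → ℤ, ∑' p, W (p - k) = S := fun k =>
    (Equiv.subRight k).tsum_eq W
  set U2 : ℝ := ∑' k, ‖u k‖^2 with hU2def
  have hU20 : 0 ≤ U2 := tsum_nonneg (fun k => sq_nonneg _)
  have hub : ∀ k, ‖u k‖ ≤ Real.sqrt U2 := by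
    intro k
    have h1 : ‖u k‖^2 ≤ U2 := Summable.le_tsum hu k (fun j _ => sq_nonneg _)
    have h2 := Real.sqrt_le_sqrt h1
    rwa [Real.sqrt_sq (norm_nonneg _)] at h2
  set B : (Fin (n+1) → ℤ) → (Fin (n+1) → ℤ) → ℝ := fun p k => c * W (p - k) with hBdef
  have hB0 : ∀ p k, 0 ≤ B p k := fun p k => mul_nonneg hc0 (hW0 _).le
  have hBrow : ∀ p, Summable (B p) := fun p => (hrowW p).mul_left c
  have hBrowSum : ∀ p, ∑' k, B p k = R := by
    intro p
    calc ∑' k, B p k = c * ∑' k, W (p - k) := tsum_mul_left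
      _ = c * S := by rw [hrowSum p]
      _ = R := by rw [hcdef, hRdef]
  have hBcol : ∀ k, Summable (fun p => B p k) := fun k => (hcolW k).mul_left c
  have hBcolSum : ∀ k, ∑' p, B p k = R := by
    intro k
    calc ∑' p, B p k = c * ∑' p, W (p - k) := tsum_mul_left
      _ = c * S := by rw [hcolSum k]
      _ = R := by rw [hcdef, hRdef]
  have hKu_summable : ∀ p, Summable (fun k => ‖opKernel a hb p k * u k‖) := by
    intro p
    refine Summable.of_nonneg_of_le (fun k => norm_nonneg _) (fun k => ?_)
      ((hBrow p).mul_right (Real.sqrt U2))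
    rw [norm_mul]
    exact mul_le_mul (hker p k) (hub k) (norm_nonneg _) (hB0 p k)
  have hBu_summable : ∀ p, Summable (fun k => B p k * ‖u k‖) := fun p =>
    Summable.of_nonneg_of_le (fun k => mul_nonneg (hB0 p k) (norm_nonneg _))
      (fun k => mul_le_mul_of_nonneg_left (hub k) (hB0 p k)) ((hBrow p).mul_right _)
  have hBu2_summable : ∀ p, Summable (fun k => B p k * ‖u k‖^2) := by
    intro p
    refine Summable.of_nonneg_of_le (fun k => mul_nonneg (hB0 p k) (sq_nonneg _))
      (fun k => ?_) (hu.mul_left c)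
    apply mul_le_mul_of_nonneg_right _ (sq_nonneg _)
    rw [hBdef]
    calc c * W (p - k) ≤ c * 1 :=
          mul_le_mul_of_nonneg_left (CV.wgt_le_one _) hc0
      _ = c := mul_one c
  set V : (Fin (n+1) → ℤ) → ℝ := fun p => ∑' k, B p k * ‖u k‖^2 with hVdef
  have hV0 : ∀ p, 0 ≤ V p := fun p => tsum_nonneg
    (fun k => mul_nonneg (hB0 p k) (sq_nonneg _))
  have hXle : ∀ p, ‖∑' k, opKernel a hb p k * u k‖ ≤ ∑' k, B p k * ‖u k‖ := by
    intro p
    refine le_trans (norm_tsum_le_tsum_norm (hKu_summable p)) ?_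
    refine Summable.tsum_le_tsum (fun k => ?_) (hKu_summable p) (hBu_summable p)
    rw [norm_mul]
    exact mul_le_mul_of_nonneg_right (hker p k) (norm_nonneg _)
  have hCS : ∀ p, (∑' k, B p k * ‖u k‖) ≤ Real.sqrt R * Real.sqrt (V p) := by
    intro p
    refine Summable.tsum_le_of_sum_le (hBu_summable p) (fun s => ?_)
    have h1 : (∑ k ∈ s, B p k * ‖u k‖)
        = ∑ k ∈ s, Real.sqrt (B p k) * (Real.sqrt (B p k) * ‖u k‖) := by
      refine Finset.sum_congr rfl fun k _ => ?_
      rw [← mul_assoc, Real.mul_self_sqrt (hB0 p k)]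
    have h2 := Finset.sum_mul_sq_le_sq_mul_sq s (fun k => Real.sqrt (B p k))
      (fun k => Real.sqrt (B p k) * ‖u k‖)
    have h3 : ∀ k, (Real.sqrt (B p k))^2 = B p k := fun k => Real.sq_sqrt (hB0 p k)
    have h5 : (∑ k ∈ s, Real.sqrt (B p k) * (Real.sqrt (B p k) * ‖u k‖))^2
        ≤ (∑ k ∈ s, B p k) * (∑ k ∈ s, B p k * ‖u k‖^2) := by
      refine le_trans h2 ?_
      apply le_of_eq
      congr 1
      · exact Finset.sum_congr rfl fun k _ => h3 k
      · refine Finset.sum_congr rfl fun k _ => ?_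
        rw [mul_pow, h3]
    have hsum1 : ∑ k ∈ s, B p k ≤ R := by
      rw [← hBrowSum p]
      exact Summable.sum_le_tsum s (fun k _ => hB0 p k) (hBrow p)
    have hsum2 : ∑ k ∈ s, B p k * ‖u k‖^2 ≤ V p :=
      Summable.sum_le_tsum s (fun k _ => mul_nonneg (hB0 p k) (sq_nonneg _)) (hBu2_summable p)
    have hX0 : 0 ≤ ∑ k ∈ s, Real.sqrt (B p k) * (Real.sqrt (B p k) * ‖u k‖) :=
      Finset.sum_nonneg fun k _ => mul_nonneg (Real.sqrt_nonneg _)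
        (mul_nonneg (Real.sqrt_nonneg _) (norm_nonneg _))
    rw [h1]
    calc (∑ k ∈ s, Real.sqrt (B p k) * (Real.sqrt (B p k) * ‖u k‖))
        = Real.sqrt ((∑ k ∈ s, Real.sqrt (B p k) * (Real.sqrt (B p k) * ‖u k‖))^2) :=
          (Real.sqrt_sq hX0).symm
      _ ≤ Real.sqrt ((∑ k ∈ s, B p k) * (∑ k ∈ s, B p k * ‖u k‖^2)) :=
          Real.sqrt_le_sqrt h5
      _ ≤ Real.sqrt (R * V p) := Real.sqrt_le_sqrt (mul_le_mul hsum1 hsum2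
          (Finset.sum_nonneg fun k _ => mul_nonneg (hB0 p k) (sq_nonneg _)) hR0)
      _ = Real.sqrt R * Real.sqrt (V p) := Real.sqrt_mul hR0 _
  have hXsq : ∀ p, ‖∑' k, opKernel a hb p k * u k‖^2 ≤ R * V p := by
    intro p
    have h1 : ‖∑' k, opKernel a hb p k * u k‖ ≤ Real.sqrt R * Real.sqrt (V p) :=
      (hXle p).trans (hCS p)
    calc ‖∑' k, opKernel a hb p k * u k‖^2
        ≤ (Real.sqrt R * Real.sqrt (V p))^2 := pow_le_pow_left₀ (norm_nonneg _) h1 2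
      _ = R * V p := by rw [mul_pow, Real.sq_sqrt hR0, Real.sq_sqrt (hV0 p)]
  have hfin : ∀ s : Finset (Fin (n+1) → ℤ), ∑ p ∈ s, V p ≤ R * U2 := by
    intro s
    have h1 : ∑ p ∈ s, V p = ∑' k, ∑ p ∈ s, B p k * ‖u k‖^2 := by
      rw [hVdef]
      exact (Summable.tsum_finsetSum (fun p _ => hBu2_summable p)).symm
    rw [h1]
    have h2 : ∀ k, ∑ p ∈ s, B p k * ‖u k‖^2 ≤ R * ‖u k‖^2 := by
      intro k
      rw [← Finset.sum_mul]
      apply mul_le_mul_of_nonneg_right _ (sq_nonneg _)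
      rw [← hBcolSum k]
      exact Summable.sum_le_tsum s (fun p _ => hB0 p k) (hBcol k)
    calc (∑' k, ∑ p ∈ s, B p k * ‖u k‖^2)
        ≤ ∑' k, R * ‖u k‖^2 := Summable.tsum_le_tsum h2
          (summable_sum (fun p _ => hBu2_summable p)) (hu.mul_left R)
      _ = R * U2 := tsum_mul_left
  have hVs : Summable V := summable_of_sum_le hV0 hfin
  have hVle : ∑' p, V p ≤ R * U2 := Summable.tsum_le_of_sum_le hVs hfin
  have hXsummable : Summable (fun p => ‖∑' k, opKernel a hb p k * u k‖^2) :=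
    Summable.of_nonneg_of_le (fun p => sq_nonneg _) hXsq (hVs.mul_left R)
  have hfinal : (∑' p, ‖∑' k, opKernel a hb p k * u k‖^2) ≤ R^2 * U2 := by
    calc (∑' p, ‖∑' k, opKernel a hb p k * u k‖^2)
        ≤ ∑' p, R * V p := Summable.tsum_le_tsum hXsq hXsummable (hVs.mul_left R)
      _ = R * ∑' p, V p := tsum_mul_left
      _ ≤ R * (R * U2) := mul_le_mul_of_nonneg_left hVle hR0
      _ = R^2 * U2 := by ring
  calc Real.sqrt (∑' p, ‖∑' k, opKernel a hb p k * u k‖^2)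
      ≤ Real.sqrt (R^2 * U2) := Real.sqrt_le_sqrt hfinal
    _ = R * Real.sqrt U2 := by
        rw [Real.sqrt_mul (sq_nonneg R), Real.sqrt_sq hR0]
    _ = 2^(n+2) * S * M * Real.sqrt U2 := by rw [hRdef]; ring
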